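/- Let K be a class of algebras of some fixed signature such that the variety HSP(K) is congruence-modular. Let B ∈ HSP(K) be subdirectly irreducible with monolith μ, and let α be the centralizer of μ, i.e., the largest congruence of B with [μ, α] = ⊥ (which exists by additivity of the commutator). Then B/α ∈ HSP_u(K). -/

import Mathlib

/-!
Basic universal algebra: signatures, algebras, homomorphisms, congruences
(forming a complete lattice), generated congruences, images and preimages of
congruences, quotient algebras, subalgebras, products, ultraproducts,
varieties (classes closed under H, S, P), the term-condition commutator,
relatively free algebras, and lax centrality.
-/

universe u v

namespace UAlg

/-- A (finitary) signature: a type of operation symbols with arities. -/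
structure Signature : Type (u + 1) where
  ops : Type u
  arity : ops → ℕ

/-- An algebra of signature `S`. -/
structure Algebra (S : Signature.{u}) : Type (u + 1) where
  carrier : Type u
  interp : ∀ o : S.ops, (Fin (S.arity o) → carrier) → carrier

variable {S : Signature.{u}}

/-- A homomorphism of algebras. -/
structure Hom (A B : Algebra S) : Type u where
  toFun : A.carrier → B.carrier
  map_interp : ∀ (o : S.ops) (a : Fin (S.arity o) → A.carrier),
    toFun (A.interp o a) = B.interp o (fun i => toFun (a i))

/-- Composition of homomorphisms. -/
def Hom.comp {A B C : Algebra S} (g : Hom B C) (f : Hom A B) : Hom A C where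
  toFun := g.toFun ∘ f.toFun
  map_interp o a := by
    simp only [Function.comp, f.map_interp, g.map_interp]

/-- A congruence on an algebra: an equivalence relation compatible with the
operations. -/
structure Cong (A : Algebra S) : Type u where
  r : A.carrier → A.carrier → Prop
  iseqv : Equivalence r
  compat : ∀ (o : S.ops) (a b : Fin (S.arity o) → A.carrier),
    (∀ i, r (a i) (b i)) → r (A.interp o a) (A.interp o b)

namespace Cong

variable {A : Algebra S}

theorem ext {c d : Cong A} (h : ∀ x y, c.r x y ↔ d.r x y) : c = d := by
  cases c; cases d
  simp only [mk.injEq]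
  funext x y
  exact propext (h x y)

instance : PartialOrder (Cong A) where
  le c d := ∀ x y, c.r x y → d.r x y
  le_refl c := fun _ _ h => h
  le_trans a b c hab hbc := fun x y h => hbc x y (hab x y h)
  le_antisymm a b h1 h2 := ext fun x y => ⟨h1 x y, h2 x y⟩

instance : InfSet (Cong A) where
  sInf s :=
    { r := fun x y => ∀ c ∈ s, c.r x y
      iseqv :=
        ⟨fun x c _ => c.iseqv.refl x,
         fun h c hc => c.iseqv.symm (h c hc),
         fun h1 h2 c hc => c.iseqv.trans (h1 c hc) (h2 c hc)⟩
      compat := fun o a b h c hc => c.compat o a b fun i => h i c hc }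

instance : CompleteLattice (Cong A) :=
  completeLatticeOfInf _ (fun s =>
    ⟨fun c hc x y h => h c hc, fun _ hd x y h c hc => hd hc x y h⟩)

end Cong

/-- The congruence generated by a binary relation. -/
def conGen (A : Algebra S) (s : A.carrier → A.carrier → Prop) : Cong A :=
  sInf {c : Cong A | ∀ x y, s x y → c.r x y}

/-- The kernel congruence of a homomorphism. -/
def Hom.ker {A B : Algebra S} (f : Hom A B) : Cong A where
  r x y := f.toFun x = f.toFun y
  iseqv := ⟨fun _ => rfl, Eq.symm, Eq.trans⟩
  compat o a b h := by
    show f.toFun (A.interp o a) = f.toFun (A.interp o b)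
    rw [f.map_interp, f.map_interp]
    exact congrArg _ (funext h)

/-- `conMap f α` (written `→f α` in the paper) is the congruence of `B`
generated by the image `f(α)` of the congruence `α` of `A`. -/
def conMap {A B : Algebra S} (f : Hom A B) (α : Cong A) : Cong B :=
  conGen B (fun x y => ∃ a a', α.r a a' ∧ f.toFun a = x ∧ f.toFun a' = y)

/-- The inverse image `f⁻¹(β)` of a congruence. -/
def conComap {A B : Algebra S} (f : Hom A B) (β : Cong B) : Cong A where
  r x y := β.r (f.toFun x) (f.toFun y)
  iseqv :=
    ⟨fun _ => β.iseqv.refl _, fun h => β.iseqv.symm h,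
     fun h1 h2 => β.iseqv.trans h1 h2⟩
  compat o a b h := by
    show β.r (f.toFun (A.interp o a)) (f.toFun (A.interp o b))
    rw [f.map_interp, f.map_interp]
    exact β.compat o _ _ h

/-- The setoid underlying a congruence. -/
def Cong.toSetoid {A : Algebra S} (c : Cong A) : Setoid A.carrier :=
  ⟨c.r, c.iseqv⟩

/-- The quotient algebra of an algebra by a congruence. -/
noncomputable def quotAlg (A : Algebra S) (c : Cong A) : Algebra S where
  carrier := Quotient c.toSetoid
  interp o a := Quotient.mk c.toSetoid (A.interp o (fun i => (a i).out))

/-- The natural (quotient) homomorphism `A → A/c`. -/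
def natHom (A : Algebra S) (c : Cong A) : Hom A (quotAlg A c) where
  toFun := Quotient.mk c.toSetoid
  map_interp o a := by
    apply Quotient.sound
    apply c.compat
    intro i
    show c.r (a i) (Quotient.mk c.toSetoid (a i)).out
    exact Quotient.exact ((Quotient.out_eq (Quotient.mk c.toSetoid (a i))).symm)

/-- A subuniverse: a subset closed under the operations. -/
structure Subuniverse (A : Algebra S) : Type u where
  carrier : Set A.carrier
  closed : ∀ (o : S.ops) (a : Fin (S.arity o) → A.carrier),
    (∀ i, a i ∈ carrier) → A.interp o a ∈ carrier

/-- The subalgebra determined by a subuniverse. -/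
def Subuniverse.alg {A : Algebra S} (s : Subuniverse A) : Algebra S where
  carrier := {x // x ∈ s.carrier}
  interp o a := ⟨A.interp o (fun i => (a i).1), s.closed o _ (fun i => (a i).2)⟩

/-- The product of a family of algebras. -/
def prodAlg {ι : Type u} (A : ι → Algebra S) : Algebra S where
  carrier := ∀ i, (A i).carrier
  interp o a i := (A i).interp o (fun j => a j i)

/-- A variety: a class of algebras closed under homomorphic images,
subalgebras, and products. -/
structure IsVariety (V : Algebra S → Prop) : Prop where
  closed_hom : ∀ (A B : Algebra S) (f : Hom A B),
    Function.Surjective f.toFun → V A → V B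
  closed_sub : ∀ (A : Algebra S) (s : Subuniverse A), V A → V s.alg
  closed_prod : ∀ (ι : Type u) (A : ι → Algebra S), (∀ i, V (A i)) → V (prodAlg A)

/-- `α` laxly centralizes `μ` with respect to the class `V`. -/
def LaxCentralizes (V : Algebra S → Prop) (B : Algebra S) (μ α : Cong B) : Prop :=
  ∃ C : Algebra S, V C ∧ ∃ (π : Hom C B) (β γ : Cong C),
    Function.Surjective π.toFun ∧ μ ≤ conMap π β ∧ α ≤ conMap π γ ∧ β ⊓ γ = ⊥

/-- `B` is a homomorphic image of a member of `K`. -/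
def InH (K : Algebra S → Prop) (B : Algebra S) : Prop :=
  ∃ A, K A ∧ ∃ f : Hom A B, Function.Surjective f.toFun

/-- `B` embeds into a product of members of `K`, i.e. `B ∈ SP(K)`. -/
def InSP (K : Algebra S → Prop) (B : Algebra S) : Prop :=
  ∃ (ι : Type u) (A : ι → Algebra S), (∀ i, K (A i)) ∧
    ∃ f : Hom B (prodAlg A), Function.Injective f.toFun

/-- `B ∈ HSP(K)`: `B` is a homomorphic image of an algebra embeddable in a
product of members of `K`. -/
def InHSP (K : Algebra S → Prop) (B : Algebra S) : Prop :=
  ∃ C : Algebra S, InSP K C ∧ ∃ f : Hom C B, Function.Surjective f.toFun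

/-- The congruence on a product given by an ultrafilter on the index set. -/
def ultraCong {ι : Type u} (A : ι → Algebra S) (U : Ultrafilter ι) :
    Cong (prodAlg A) where
  r x y := {i | x i = y i} ∈ U
  iseqv := by
    refine ⟨fun x => ?_, fun {x y} h => ?_, fun {x y z} h1 h2 => ?_⟩
    · have : {i | x i = x i} = Set.univ := by ext i; simp
      rw [this]; exact Filter.univ_mem
    · have : {i | y i = x i} = {i | x i = y i} := by ext i; exact eq_comm
      rw [this]; exact h
    · refine Filter.mem_of_superset (Filter.inter_mem h1 h2) ?_
      intro i hi
      exact hi.1.trans hi.2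
  compat o a b h := by
    have h1 : (⋂ j, {i | a j i = b j i}) ∈ (U : Filter ι) :=
      (Filter.iInter_mem).2 h
    refine Filter.mem_of_superset h1 ?_
    intro i hi
    simp only [Set.mem_iInter, Set.mem_setOf_eq] at hi
    show (A i).interp o (fun j => a j i) = (A i).interp o (fun j => b j i)
    exact congrArg _ (funext hi)

/-- `B ∈ HSP_u(K)`: `B` is a homomorphic image of an algebra embeddable in an
ultraproduct of members of `K`. -/
def InHSPu (K : Algebra S → Prop) (B : Algebra S) : Prop :=
  ∃ (ι : Type u) (A : ι → Algebra S) (U : Ultrafilter ι), (∀ i, K (A i)) ∧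
    ∃ C : Algebra S,
      (∃ g : Hom C (quotAlg (prodAlg A) (ultraCong A U)),
        Function.Injective g.toFun) ∧
      ∃ f : Hom C B, Function.Surjective f.toFun

/-- `μ` is the monolith of `B`: the minimum nontrivial congruence.
In particular its existence means `B` is subdirectly irreducible. -/
def IsMonolith (B : Algebra S) (μ : Cong B) : Prop :=
  μ ≠ ⊥ ∧ ∀ θ : Cong B, θ ≠ ⊥ → μ ≤ θ

/-- Terms of signature `S` over a set `X` of variables. -/
inductive Tm (S : Signature.{u}) (X : Type v) : Type max u v where
  | var : X → Tm S X
  | app : (o : S.ops) → (Fin (S.arity o) → Tm S X) → Tm S X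

/-- Evaluation of a term in an algebra under an assignment of the variables. -/
def Tm.eval {X : Type v} (A : Algebra S) (v : X → A.carrier) :
    Tm S X → A.carrier
  | .var x => v x
  | .app o t => A.interp o (fun i => Tm.eval A v (t i))

/-- The (term-condition) centralizing relation `C(α, β; δ)`. -/
def Centralizes {A : Algebra S} (α β δ : Cong A) : Prop :=
  ∀ (n : ℕ) (t : Tm S (Unit ⊕ Fin n)) (a b : A.carrier)
    (c d : Fin n → A.carrier),
    α.r a b → (∀ i, β.r (c i) (d i)) →
    δ.r (t.eval A (Sum.elim (fun _ => a) c)) (t.eval A (Sum.elim (fun _ => a) d)) →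
    δ.r (t.eval A (Sum.elim (fun _ => b) c)) (t.eval A (Sum.elim (fun _ => b) d))

/-- The commutator `[α, β]`: the least congruence `δ` such that `α`
centralizes `β` modulo `δ` (the Freese–McKenzie commutator, which is the
modular commutator in congruence-modular varieties). -/
def commutator {A : Algebra S} (α β : Cong A) : Cong A :=
  sInf {δ : Cong A | Centralizes α β δ}

/-- The term algebra over a set of variables. -/
def termAlg (S : Signature.{u}) (X : Type u) : Algebra S :=
  ⟨Tm S X, Tm.app⟩

/-- The congruence of `V`-equations on the term algebra: two terms are related
iff they evaluate the same way in every member of `V`. -/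
def eqThy (V : Algebra S → Prop) (X : Type u) : Cong (termAlg S X) where
  r s t := ∀ A : Algebra S, V A → ∀ v : X → A.carrier, s.eval A v = t.eval A v
  iseqv :=
    ⟨fun _ _ _ _ => rfl, fun h A hA v => (h A hA v).symm,
     fun h1 h2 A hA v => (h1 A hA v).trans (h2 A hA v)⟩
  compat o a b h A hA v := by
    show Tm.eval A v (Tm.app o a) = Tm.eval A v (Tm.app o b)
    simp only [Tm.eval]
    exact congrArg _ (funext fun i => h i A hA v)

/-- The relatively free algebra of `V` on the set `X` of generators. -/
noncomputable def freeAlg (V : Algebra S → Prop) (X : Type u) : Algebra S :=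
  quotAlg (termAlg S X) (eqThy V X)

/-- The canonical generators of the relatively free algebra. -/
def freeGen (V : Algebra S → Prop) (X : Type u) (x : X) :
    (freeAlg V X).carrier :=
  Quotient.mk (eqThy V X).toSetoid (Tm.var x)

/-- The homomorphism from the relatively free algebra of `V` to an algebra
`B ∈ V` induced by an assignment of the generators. -/
def evalFreeHom (V : Algebra S → Prop) (X : Type u) (B : Algebra S)
    (hB : V B) (v : X → B.carrier) : Hom (freeAlg V X) B where
  toFun := Quotient.lift (fun t : Tm S X => t.eval B v) (fun s t h => h B hB v)
  map_interp o a := by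
    show Tm.eval B v (Tm.app o (fun i => (a i).out)) = _
    simp only [Tm.eval]
    congr 1
    funext i
    conv_rhs => rw [← Quotient.out_eq (a i)]
    rfl



/-! ### Section 1: congruence lattice basics -/

namespace Cong

variable {A : Algebra S}

theorem le_iff {c d : Cong A} : c ≤ d ↔ ∀ x y, c.r x y → d.r x y := Iff.rfl

theorem le_def {c d : Cong A} (h : c ≤ d) {x y : A.carrier} (hxy : c.r x y) : d.r x y :=
  h x y hxy

/-- The equality congruence. -/
def eqCong (A : Algebra S) : Cong A where
  r := Eq
  iseqv := ⟨fun _ => rfl, Eq.symm, Eq.trans⟩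
  compat o a b h := congrArg _ (funext h)

/-- The full congruence. -/
def fullCong (A : Algebra S) : Cong A where
  r _ _ := True
  iseqv := ⟨fun _ => trivial, fun _ => trivial, fun _ _ => trivial⟩
  compat _ _ _ _ := trivial

theorem eqCong_le (c : Cong A) : eqCong A ≤ c := fun _ _ h => h ▸ c.iseqv.refl _

theorem bot_eq : (⊥ : Cong A) = eqCong A :=
  le_antisymm bot_le (fun _ _ h => h ▸ (⊥ : Cong A).iseqv.refl _)

theorem bot_r {x y : A.carrier} : (⊥ : Cong A).r x y ↔ x = y := by
  rw [bot_eq]; exact Iff.rfl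

theorem top_r (x y : A.carrier) : (⊤ : Cong A).r x y :=
  (le_top : fullCong A ≤ ⊤) x y trivial

theorem sInf_r {s : Set (Cong A)} {x y : A.carrier} :
    (sInf s).r x y ↔ ∀ c ∈ s, c.r x y := Iff.rfl

theorem inf_r {c d : Cong A} {x y : A.carrier} :
    (c ⊓ d).r x y ↔ c.r x y ∧ d.r x y := by
  constructor
  · intro h
    exact ⟨(inf_le_left : c ⊓ d ≤ c) x y h, (inf_le_right : c ⊓ d ≤ d) x y h⟩
  · rintro ⟨h1, h2⟩
    have : c ⊓ d = sInf {c, d} := by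
      rw [sInf_insert, sInf_singleton]
    rw [this]
    rintro e (rfl | he)
    · exact h1
    · cases he; exact h2

end Cong

/-! Joins as reflexive-transitive closures of chains. -/

section Join

variable {A : Algebra S}

open Relation

theorem rtg_compat (R : A.carrier → A.carrier → Prop)
    (hsingle : ∀ (o : S.ops) (a : Fin (S.arity o) → A.carrier) (j : Fin (S.arity o))
      (u v : A.carrier), R u v →
      ReflTransGen R (A.interp o (Function.update a j u)) (A.interp o (Function.update a j v)))
    (o : S.ops) (a b : Fin (S.arity o) → A.carrier)
    (h : ∀ i, ReflTransGen R (a i) (b i)) :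
    ReflTransGen R (A.interp o a) (A.interp o b) := by
  classical
  -- single coordinate, RTG version
  have single' : ∀ (a : Fin (S.arity o) → A.carrier) (j : Fin (S.arity o)) (u v : A.carrier),
      ReflTransGen R u v →
      ReflTransGen R (A.interp o (Function.update a j u)) (A.interp o (Function.update a j v)) := by
    intro a j u v huv
    induction huv with
    | refl => exact ReflTransGen.refl
    | tail _ hstep ih => exact ih.trans (hsingle o a j _ _ hstep)
  -- patch over finsets
  have key : ∀ F : Finset (Fin (S.arity o)),
      ReflTransGen R (A.interp o a) (A.interp o (fun i => if i ∈ F then b i else a i)) := by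
    intro F
    induction F using Finset.induction with
    | empty =>
      have : (fun i => if i ∈ (∅ : Finset (Fin (S.arity o))) then b i else a i) = a := by
        funext i; simp
      rw [this]
    | @insert j F hj ih =>
      refine ih.trans ?_
      have h1 : (fun i => if i ∈ F then b i else a i) =
          Function.update (fun i => if i ∈ insert j F then b i else a i) j (a j) := by
        funext i
        by_cases hij : i = j
        · subst hij; simp [Function.update, hj]
        · simp [Function.update, hij, Finset.mem_insert]
      have h2 : (fun i => if i ∈ insert j F then b i else a i) =
          Function.update (fun i => if i ∈ insert j F then b i else a i) j (b j) := by
        funext i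
        by_cases hij : i = j
        · subst hij; simp [Function.update]
        · simp [Function.update, hij]
      rw [h1]
      nth_rewrite 2 [h2]
      exact single' _ j _ _ (h j)
  have := key Finset.univ
  simpa using this

/-- One step of the join of two congruences. -/
def oneStep (c d : Cong A) : A.carrier → A.carrier → Prop := fun x y => c.r x y ∨ d.r x y

/-- The join of two congruences, described via chains. -/
def joinCong (c d : Cong A) : Cong A where
  r := Relation.ReflTransGen (oneStep c d)
  iseqv := by
    constructor
    · intro x; exact ReflTransGen.refl
    · intro x y h
      induction h with
      | refl => exact ReflTransGen.refl
      | tail _ hstep ih =>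
        refine ReflTransGen.trans (ReflTransGen.single ?_) ih
        cases hstep with
        | inl h => exact Or.inl (c.iseqv.symm h)
        | inr h => exact Or.inr (d.iseqv.symm h)
    · intro x y z h1 h2; exact h1.trans h2
  compat o a b h := by
    refine rtg_compat _ ?_ o a b h
    intro o a j u v huv
    refine ReflTransGen.single ?_
    cases huv with
    | inl h =>
      refine Or.inl (c.compat o _ _ ?_)
      intro i
      by_cases hij : i = j
      · subst hij; simpa using h
      · simp [Function.update, hij]
        exact c.iseqv.refl _
    | inr h =>
      refine Or.inr (d.compat o _ _ ?_)
      intro i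
      by_cases hij : i = j
      · subst hij; simpa using h
      · simp [Function.update, hij]
        exact d.iseqv.refl _

theorem sup_eq_joinCong (c d : Cong A) : c ⊔ d = joinCong c d := by
  apply le_antisymm
  · apply sup_le
    · exact fun x y h => ReflTransGen.single (Or.inl h)
    · exact fun x y h => ReflTransGen.single (Or.inr h)
  · intro x y h
    induction h with
    | refl => exact (c ⊔ d).iseqv.refl _
    | tail _ hstep ih =>
      refine (c ⊔ d).iseqv.trans ih ?_
      cases hstep with
      | inl h => exact (le_sup_left : c ≤ c ⊔ d) _ _ h
      | inr h => exact (le_sup_right : d ≤ c ⊔ d) _ _ h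

theorem sup_r {c d : Cong A} {x y : A.carrier} :
    (c ⊔ d).r x y ↔ Relation.ReflTransGen (oneStep c d) x y := by
  rw [sup_eq_joinCong]; exact Iff.rfl

theorem rtg_chain {α : Type*} {r : α → α → Prop} {a b : α}
    (h : Relation.ReflTransGen r a b) :
    ∃ (L : ℕ) (u : ℕ → α), u 0 = a ∧ u L = b ∧ ∀ l < L, r (u l) (u (l + 1)) := by
  induction h with
  | refl => exact ⟨0, fun _ => a, rfl, rfl, fun l hl => absurd hl (Nat.not_lt_zero l)⟩
  | @tail b' c hab hbc ih =>
    obtain ⟨L, u, h0, hL, hstep⟩ := ih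
    refine ⟨L + 1, fun l => if l = L + 1 then c else u l, by simp [h0], by simp, ?_⟩
    intro l hl
    rcases Nat.lt_succ_iff_lt_or_eq.mp hl with hl' | heq
    · have h1 : l ≠ L + 1 := by omega
      have h2 : l + 1 ≠ L + 1 := by omega
      simp only [h1, h2, if_false]
      exact hstep l hl'
    · subst heq
      have h1 : l ≠ l + 1 := by omega
      simp only [h1, if_false, if_pos rfl, hL]
      exact hbc

end Join

/-! conGen lemmas -/

section ConGen

variable {A : Algebra S}

theorem conGen_r_of (s : A.carrier → A.carrier → Prop) {x y : A.carrier} (h : s x y) :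
    (conGen A s).r x y := fun c hc => hc x y h

theorem conGen_le {s : A.carrier → A.carrier → Prop} {c : Cong A}
    (h : ∀ x y, s x y → c.r x y) : conGen A s ≤ c :=
  sInf_le h

end ConGen

/-! ### Section 2: term lemmas -/

section Terms

variable {A B : Algebra S}

theorem tm_eval_compat {X : Type v} (ρ : Cong A) (v v' : X → A.carrier)
    (h : ∀ z, ρ.r (v z) (v' z)) (t : Tm S X) :
    ρ.r (t.eval A v) (t.eval A v') := by
  induction t with
  | var z => exact h z
  | app o ts ih => exact ρ.compat o _ _ fun i => ih i

theorem hom_eval {X : Type v} (f : Hom A B) (v : X → A.carrier) (t : Tm S X) :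
    f.toFun (t.eval A v) = t.eval B (fun z => f.toFun (v z)) := by
  induction t with
  | var z => rfl
  | app o ts ih =>
    show f.toFun (A.interp o _) = _
    rw [f.map_interp]
    show B.interp o _ = B.interp o _
    congr 1
    funext i
    exact ih i

/-- Relabelling of variables in a term. -/
def Tm.relabel {X : Type v} {Y : Type w} (g : X → Y) : Tm S X → Tm S Y
  | .var z => .var (g z)
  | .app o ts => .app o (fun i => Tm.relabel g (ts i))

theorem eval_relabel {X : Type v} {Y : Type w} (g : X → Y) (t : Tm S X)
    (v : Y → A.carrier) :
    (t.relabel g).eval A v = t.eval A (fun z => v (g z)) := by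
  induction t with
  | var z => rfl
  | app o ts ih =>
    show A.interp o _ = A.interp o _
    congr 1
    funext i
    exact ih i

/-- Every term factors through a finite set of variables. -/
theorem tm_factor {Z : Type u} (t : Tm S Z) :
    ∃ (W : Type u) (_ : Fintype W) (t' : Tm S W) (g : W → Z),
      ∀ (G : Algebra S) (v : Z → G.carrier), t.eval G v = t'.eval G (fun w => v (g w)) := by
  induction t with
  | var z =>
    exact ⟨PUnit, inferInstance, .var PUnit.unit, fun _ => z, fun G v => rfl⟩
  | app o ts ih =>
    choose W ft t' g hg using ih
    haveI := ft
    refine ⟨Σ i, W i, inferInstance, .app o (fun i => (t' i).relabel (Sigma.mk i)),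
      fun ⟨i, w⟩ => g i w, ?_⟩
    intro G v
    show G.interp o _ = G.interp o _
    congr 1
    funext i
    rw [eval_relabel]
    exact hg i G v

end Terms

/-! ### Section 3: elementary facts about the centralizing relation -/

section Cent

variable {A : Algebra S}

theorem cent_mono_left {x x' y δ : Cong A} (hx : x' ≤ x) (h : Centralizes x y δ) :
    Centralizes x' y δ := fun n t a b c d hab hcd hδ =>
  h n t a b c d (hx _ _ hab) hcd hδ

theorem cent_mono_right {x y y' δ : Cong A} (hy : y' ≤ y) (h : Centralizes x y δ) :
    Centralizes x y' δ := fun n t a b c d hab hcd hδ =>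
  h n t a b c d hab (fun i => hy _ _ (hcd i)) hδ

theorem cent_of_left_le {x y δ : Cong A} (hx : x ≤ δ) : Centralizes x y δ := by
  intro n t a b c d hab hcd hδ
  have h1 : δ.r (t.eval A (Sum.elim (fun _ => b) c)) (t.eval A (Sum.elim (fun _ => a) c)) := by
    refine tm_eval_compat δ _ _ ?_ t
    rintro (z | z)
    · exact δ.iseqv.symm (hx _ _ hab)
    · exact δ.iseqv.refl _
  have h2 : δ.r (t.eval A (Sum.elim (fun _ => a) d)) (t.eval A (Sum.elim (fun _ => b) d)) := by
    refine tm_eval_compat δ _ _ ?_ t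
    rintro (z | z)
    · exact hx _ _ hab
    · exact δ.iseqv.refl _
  exact δ.iseqv.trans (δ.iseqv.trans h1 hδ) h2

theorem cent_of_right_le {x y δ : Cong A} (hy : y ≤ δ) : Centralizes x y δ := by
  intro n t a b c d hab hcd hδ
  refine tm_eval_compat δ _ _ ?_ t
  rintro (z | z)
  · exact δ.iseqv.refl _
  · exact hy _ _ (hcd z)

theorem cent_sInf {x y : Cong A} {s : Set (Cong A)} (h : ∀ δ ∈ s, Centralizes x y δ) :
    Centralizes x y (sInf s) := by
  intro n t a b c d hab hcd hδ
  intro e he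
  exact h e he n t a b c d hab hcd (hδ e he)

theorem cent_comm (x y : Cong A) : Centralizes x y (commutator x y) :=
  cent_sInf (fun _ hδ => hδ)

theorem comm_le_of_cent {x y δ : Cong A} (h : Centralizes x y δ) : commutator x y ≤ δ :=
  sInf_le h

theorem comm_le_left (x y : Cong A) : commutator x y ≤ x :=
  comm_le_of_cent (cent_of_left_le le_rfl)

theorem comm_le_right (x y : Cong A) : commutator x y ≤ y :=
  comm_le_of_cent (cent_of_right_le le_rfl)

theorem cent_sup_left {x y z δ : Cong A} (hx : Centralizes x z δ) (hy : Centralizes y z δ) :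
    Centralizes (x ⊔ y) z δ := by
  intro n t a b c d hab hcd hδ
  rw [sup_r] at hab
  induction hab with
  | refl => exact hδ
  | tail _ hstep ih =>
    cases hstep with
    | inl h => exact hx n t _ _ c d h hcd ih
    | inr h => exact hy n t _ _ c d h hcd ih

end Cent

/-! ### Matrices -/

section Mat

variable {A : Algebra S}

/-- The set of `(x,y)`-matrices. -/
def Mat (x y : Cong A) (p q r s : A.carrier) : Prop :=
  ∃ (X Y : Type u) (t : Tm S (X ⊕ Y)) (a b : X → A.carrier) (c d : Y → A.carrier),
    (∀ j, x.r (a j) (b j)) ∧ (∀ i, y.r (c i) (d i)) ∧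
    p = t.eval A (Sum.elim a c) ∧ q = t.eval A (Sum.elim a d) ∧
    r = t.eval A (Sum.elim b c) ∧ s = t.eval A (Sum.elim b d)

theorem Mat.row_top {x y : Cong A} {p q r s : A.carrier} (h : Mat x y p q r s) : y.r p q := by
  obtain ⟨X, Y, t, a, b, c, d, hab, hcd, rfl, rfl, rfl, rfl⟩ := h
  refine tm_eval_compat y _ _ ?_ t
  rintro (z | z)
  · exact y.iseqv.refl _
  · exact hcd z

theorem Mat.row_bot {x y : Cong A} {p q r s : A.carrier} (h : Mat x y p q r s) : y.r r s := by
  obtain ⟨X, Y, t, a, b, c, d, hab, hcd, rfl, rfl, rfl, rfl⟩ := h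
  refine tm_eval_compat y _ _ ?_ t
  rintro (z | z)
  · exact y.iseqv.refl _
  · exact hcd z

theorem Mat.col_left {x y : Cong A} {p q r s : A.carrier} (h : Mat x y p q r s) : x.r p r := by
  obtain ⟨X, Y, t, a, b, c, d, hab, hcd, rfl, rfl, rfl, rfl⟩ := h
  refine tm_eval_compat x _ _ ?_ t
  rintro (z | z)
  · exact hab z
  · exact x.iseqv.refl _

theorem Mat.col_right {x y : Cong A} {p q r s : A.carrier} (h : Mat x y p q r s) : x.r q s := by
  obtain ⟨X, Y, t, a, b, c, d, hab, hcd, rfl, rfl, rfl, rfl⟩ := h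
  refine tm_eval_compat x _ _ ?_ t
  rintro (z | z)
  · exact hab z
  · exact x.iseqv.refl _

theorem Mat.ypair {x y : Cong A} {u v : A.carrier} (h : y.r u v) : Mat x y u v u v := by
  refine ⟨PUnit, PUnit, .var (Sum.inr PUnit.unit), fun _ => u, fun _ => u,
    fun _ => u, fun _ => v, fun _ => x.iseqv.refl _, fun _ => h, rfl, rfl, rfl, rfl⟩

theorem Mat.xpair {x y : Cong A} {u v : A.carrier} (h : x.r u v) : Mat x y u u v v := by
  refine ⟨PUnit, PUnit, .var (Sum.inl PUnit.unit), fun _ => u, fun _ => v,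
    fun _ => u, fun _ => u, fun _ => h, fun _ => y.iseqv.refl _, rfl, rfl, rfl, rfl⟩

theorem Mat.diag {x y : Cong A} (u : A.carrier) : Mat x y u u u u :=
  Mat.ypair (y.iseqv.refl u)

theorem Mat.transpose {x y : Cong A} {p q r s : A.carrier} (h : Mat x y p q r s) :
    Mat y x p r q s := by
  obtain ⟨X, Y, t, a, b, c, d, hab, hcd, rfl, rfl, rfl, rfl⟩ := h
  refine ⟨Y, X, t.relabel Sum.swap, c, d, a, b, hcd, hab, ?_, ?_, ?_, ?_⟩ <;>
  · rw [eval_relabel]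
    congr 1
    funext z
    cases z <;> rfl

theorem Mat.op {x y : Cong A} (o : S.ops) (p q r s : Fin (S.arity o) → A.carrier)
    (h : ∀ i, Mat x y (p i) (q i) (r i) (s i)) :
    Mat x y (A.interp o p) (A.interp o q) (A.interp o r) (A.interp o s) := by
  choose X Y t a b c d hab hcd hp hq hr hs using h
  refine ⟨Σ i, X i, Σ i, Y i,
    .app o (fun i => (t i).relabel (Sum.map (Sigma.mk i) (Sigma.mk i))),
    fun ⟨i, j⟩ => a i j, fun ⟨i, j⟩ => b i j, fun ⟨i, j⟩ => c i j, fun ⟨i, j⟩ => d i j,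
    fun ⟨i, j⟩ => hab i j, fun ⟨i, j⟩ => hcd i j, ?_, ?_, ?_, ?_⟩ <;>
  · show _ = A.interp o _
    congr 1
    funext i
    rw [eval_relabel]
    first
      | rw [hp i] | rw [hq i] | rw [hr i] | rw [hs i]
    congr 1
    funext z
    cases z <;> rfl

theorem Mat.eval {x y : Cong A} {Z : Type v} (t : Tm S Z)
    (p q r s : Z → A.carrier) (h : ∀ z, Mat x y (p z) (q z) (r z) (s z)) :
    Mat x y (t.eval A p) (t.eval A q) (t.eval A r) (t.eval A s) := by
  induction t with
  | var z => exact h z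
  | app o ts ih => exact Mat.op o _ _ _ _ fun i => ih i

/-- The key transfer: the term condition applies to all matrices. -/
theorem C_mat {x y δ : Cong A} (hC : Centralizes x y δ) {p q r s : A.carrier}
    (hm : Mat x y p q r s) (hpq : δ.r p q) : δ.r r s := by
  classical
  obtain ⟨X, Y, T, a, b, c, d, hab, hcd, rfl, rfl, rfl, rfl⟩ := hm
  obtain ⟨W, ftW, T', g, hfac⟩ := tm_factor T
  rw [hfac, hfac] at hpq ⊢
  set vc : Finset W → W → A.carrier :=
    fun F w => if w ∈ F then Sum.elim b c (g w) else Sum.elim a c (g w) with hvc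
  set vd : Finset W → W → A.carrier :=
    fun F w => if w ∈ F then Sum.elim b d (g w) else Sum.elim a d (g w) with hvd
  have key : ∀ F : Finset W, δ.r (T'.eval A (vc F)) (T'.eval A (vd F)) := by
    intro F
    induction F using Finset.induction with
    | empty =>
      have h1 : vc ∅ = fun w => Sum.elim a c (g w) := by funext w; simp [hvc]
      have h2 : vd ∅ = fun w => Sum.elim a d (g w) := by funext w; simp [hvd]
      rw [h1, h2]; exact hpq
    | @insert k F hk ih =>
      cases hgk : g k with
      | inr i0 =>
        have h1 : vc (insert k F) = vc F := by
          funext w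
          rcases eq_or_ne w k with rfl | hw
          · simp [hvc, hk, hgk]
          · simp [hvc, hw, Finset.mem_insert]
        have h2 : vd (insert k F) = vd F := by
          funext w
          rcases eq_or_ne w k with rfl | hw
          · simp [hvd, hk, hgk]
          · simp [hvd, hw, Finset.mem_insert]
        rw [h1, h2]; exact ih
      | inl j0 =>
        set Q := {w : W // w ≠ k} with hQ
        set e : Q ≃ Fin (Fintype.card Q) := Fintype.equivFin Q with he
        set φ : W → Unit ⊕ Fin (Fintype.card Q) :=
          fun w => if h : w = k then Sum.inl () else Sum.inr (e ⟨w, h⟩) with hφ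
        set cc : Fin (Fintype.card Q) → A.carrier := fun i => vc F (e.symm i).1 with hcc
        set dd : Fin (Fintype.card Q) → A.carrier := fun i => vd F (e.symm i).1 with hdd
        have hy : ∀ i, y.r (cc i) (dd i) := by
          intro i
          have hw : (e.symm i).1 ≠ k := (e.symm i).2
          by_cases hmem : (e.symm i).1 ∈ F <;>
          · simp only [hcc, hdd, hvc, hvd, hmem, if_pos, if_neg, if_true, if_false]
            cases g (e.symm i).1 with
            | inl j => exact y.iseqv.refl _
            | inr i' => exact hcd i'
        have hx2 : x.r (a j0) (b j0) := hab j0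
        have evc : (fun w => Sum.elim (fun _ : Unit => a j0) cc (φ w)) = vc F := by
          funext w
          rcases eq_or_ne w k with rfl | hw
          · simp only [hφ, dif_pos]
            show a j0 = vc F w
            simp [hvc, hk, hgk]
          · simp only [hφ, dif_neg hw]
            show cc (e ⟨w, hw⟩) = vc F w
            simp [hcc]
        have evd : (fun w => Sum.elim (fun _ : Unit => a j0) dd (φ w)) = vd F := by
          funext w
          rcases eq_or_ne w k with rfl | hw
          · simp only [hφ, dif_pos]
            show a j0 = vd F w
            simp [hvd, hk, hgk]
          · simp only [hφ, dif_neg hw]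
            show dd (e ⟨w, hw⟩) = vd F w
            simp [hdd]
        have evc' : (fun w => Sum.elim (fun _ : Unit => b j0) cc (φ w)) = vc (insert k F) := by
          funext w
          rcases eq_or_ne w k with rfl | hw
          · simp only [hφ, dif_pos]
            show b j0 = vc (insert w F) w
            simp [hvc, hgk]
          · simp only [hφ, dif_neg hw]
            show cc (e ⟨w, hw⟩) = vc (insert k F) w
            simp only [hcc, Equiv.symm_apply_apply]
            simp [hvc, Finset.mem_insert, hw]
        have evd' : (fun w => Sum.elim (fun _ : Unit => b j0) dd (φ w)) = vd (insert k F) := by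
          funext w
          rcases eq_or_ne w k with rfl | hw
          · simp only [hφ, dif_pos]
            show b j0 = vd (insert w F) w
            simp [hvd, hgk]
          · simp only [hφ, dif_neg hw]
            show dd (e ⟨w, hw⟩) = vd (insert k F) w
            simp only [hdd, Equiv.symm_apply_apply]
            simp [hvd, Finset.mem_insert, hw]
        have inst := hC (Fintype.card Q) (T'.relabel φ) (a j0) (b j0) cc dd hx2 hy
        rw [eval_relabel, eval_relabel, eval_relabel, eval_relabel,
          evc, evd, evc', evd'] at inst
        exact inst ih
  have h1 : vc Finset.univ = fun w => Sum.elim b c (g w) := by funext w; simp [hvc]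
  have h2 : vd Finset.univ = fun w => Sum.elim b d (g w) := by funext w; simp [hvd]
  rw [← h1, ← h2]
  exact key Finset.univ

end Mat

/-! ### Section 4: the free algebra lies in the variety -/

section Free

variable {K : Algebra S → Prop}

/-- The identity homomorphism. -/
def idHom (A : Algebra S) : Hom A A := ⟨id, fun _ _ => rfl⟩

theorem K_sub_InHSP {A : Algebra S} (hA : K A) : InHSP K A := by
  refine ⟨A, ⟨PUnit, fun _ => A, fun _ => hA,
    ⟨fun a _ => a, fun o a => rfl⟩, fun a b h => congrFun h PUnit.unit⟩,
    idHom A, fun a => ⟨a, rfl⟩⟩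

theorem prod_eval {ι : Type u} (D : ι → Algebra S) {Z : Type v} (t : Tm S Z)
    (w : Z → (prodAlg D).carrier) (i : ι) :
    t.eval (prodAlg D) w i = t.eval (D i) (fun z => w z i) := by
  induction t with
  | var z => rfl
  | app o ts ih =>
    show (D i).interp o _ = (D i).interp o _
    congr 1
    funext j
    exact ih j

theorem separation {X : Type u} {s t : Tm S X}
    (h : ¬ (eqThy (InHSP K) X).r s t) :
    ∃ A, K A ∧ ∃ v : X → A.carrier, s.eval A v ≠ t.eval A v := by
  by_contra hcon
  push_neg at hcon
  apply h
  intro A hA v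
  obtain ⟨C, ⟨ι, D, hD, e, einj⟩, f, fsurj⟩ := hA
  choose vl hvl using fun x => fsurj (v x)
  have hv : v = fun x => f.toFun (vl x) := by funext x; rw [hvl]
  rw [hv, ← hom_eval, ← hom_eval]
  have : s.eval C vl = t.eval C vl := by
    apply einj
    rw [hom_eval, hom_eval]
    funext i
    rw [prod_eval, prod_eval]
    exact hcon (D i) (hD i) _
  rw [this]

theorem freeAlg_mem (X : Type u) : InHSP K (freeAlg (InHSP K) X) := by
  classical
  refine ⟨freeAlg (InHSP K) X, ?_, idHom _, fun a => ⟨a, rfl⟩⟩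
  by_cases hsep : ∀ s t : Tm S X, ¬ (eqThy (InHSP K) X).r s t → False
  · -- all terms are equal in the free algebra; embed into the empty product
    refine ⟨PEmpty, fun i => i.elim, fun i => i.elim,
      ⟨fun _ => (fun i => i.elim), fun o a => funext (fun i => i.elim)⟩, ?_⟩
    intro q q' _
    induction q using Quotient.inductionOn with
    | h s =>
      induction q' using Quotient.inductionOn with
      | h t =>
        by_contra hne
        exact hsep s t (fun hr => hne (Quotient.sound hr))
  · push_neg at hsep
    set ι := {st : Tm S X × Tm S X // ¬ (eqThy (InHSP K) X).r st.1 st.2} with hι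
    have hsepι : ∀ i : ι, ∃ A, K A ∧ ∃ v : X → A.carrier,
        (i.1.1).eval A v ≠ (i.1.2).eval A v := fun i => separation i.2
    choose Alg hK vfun hne using hsepι
    set fl : Tm S X → (prodAlg Alg).carrier := fun tm i => tm.eval (Alg i) (vfun i) with hfl
    have hwd : ∀ s t : Tm S X, (eqThy (InHSP K) X).r s t → fl s = fl t := by
      intro s t hst
      funext i
      exact hst (Alg i) (K_sub_InHSP (hK i)) (vfun i)
    set F : (freeAlg (InHSP K) X).carrier → (prodAlg Alg).carrier :=
      Quotient.lift fl hwd with hFdef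
    have hF : ∀ q, F q = fl q.out := by
      intro q
      conv_lhs => rw [← Quotient.out_eq q]
      rfl
    refine ⟨ι, Alg, hK, ⟨F, ?_⟩, ?_⟩
    · intro o a
      show F (Quotient.mk _ (Tm.app o (fun j => (a j).out))) = _
      funext i
      show (Alg i).interp o _ = (Alg i).interp o _
      congr 1
      funext j
      exact (congrFun (hF (a j)) i).symm
    · intro q q' hqq'
      induction q using Quotient.inductionOn with
      | h s =>
        induction q' using Quotient.inductionOn with
        | h t =>
          by_contra hne2
          have hrep : ¬ (eqThy (InHSP K) X).r s t := fun hr => hne2 (Quotient.sound hr)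
          exact hne ⟨(s, t), hrep⟩ (congrFun hqq' ⟨(s, t), hrep⟩)

end Free

/-! ### Section 5: Day chains from congruence modularity -/

section Day

variable (K : Algebra S → Prop)

/-- The free algebra on four generators. -/
noncomputable def F4 : Algebra S := freeAlg (InHSP K) (ULift.{u} (Fin 4))

/-- Its four canonical generators. -/
noncomputable def g4 (i : Fin 4) : (F4 K).carrier := freeGen (InHSP K) (ULift.{u} (Fin 4)) (ULift.up i)

/-- The congruence collapsing the two rows. -/
noncomputable def bCong : Cong (F4 K) :=
  conGen (F4 K) (fun p q => (p = g4 K 0 ∧ q = g4 K 1) ∨ (p = g4 K 2 ∧ q = g4 K 3))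

/-- The congruence identifying the ends and the middle. -/
noncomputable def zCong : Cong (F4 K) :=
  conGen (F4 K) (fun p q => (p = g4 K 0 ∧ q = g4 K 3) ∨ (p = g4 K 1 ∧ q = g4 K 2))

/-- The congruence identifying the middle. -/
noncomputable def gCong : Cong (F4 K) :=
  conGen (F4 K) (fun p q => p = g4 K 1 ∧ q = g4 K 2)

/-- A Day chain: a Maltsev chain witnessing the modular law in the free
algebra on four generators. -/
structure DayCh : Type u where
  L : ℕ
  u : ℕ → (F4 K).carrier
  h0 : u 0 = g4 K 0
  hL : u L = g4 K 3
  hstep : ∀ l < L, (gCong K).r (u l) (u (l + 1)) ∨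
    ((bCong K ⊓ zCong K)).r (u l) (u (l + 1))

theorem dayCh_exists (hmod : ∀ A : Algebra S, InHSP K A → IsModularLattice (Cong A)) :
    Nonempty (DayCh K) := by
  haveI := hmod (F4 K) (freeAlg_mem _)
  have h1 : (gCong K) ≤ (zCong K) := by
    apply conGen_le
    rintro x y ⟨rfl, rfl⟩
    exact conGen_r_of _ (Or.inr ⟨rfl, rfl⟩)
  have h2 : (zCong K).r (g4 K 0) (g4 K 3) := conGen_r_of _ (Or.inl ⟨rfl, rfl⟩)
  have h3 : (bCong K ⊔ gCong K).r (g4 K 0) (g4 K 3) := by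
    have s1 : (bCong K ⊔ gCong K).r (g4 K 0) (g4 K 1) :=
      (le_sup_left : bCong K ≤ _) _ _ (conGen_r_of _ (Or.inl ⟨rfl, rfl⟩))
    have s2 : (bCong K ⊔ gCong K).r (g4 K 1) (g4 K 2) :=
      (le_sup_right : gCong K ≤ _) _ _ (conGen_r_of _ ⟨rfl, rfl⟩)
    have s3 : (bCong K ⊔ gCong K).r (g4 K 2) (g4 K 3) :=
      (le_sup_left : bCong K ≤ _) _ _ (conGen_r_of _ (Or.inr ⟨rfl, rfl⟩))
    exact (bCong K ⊔ gCong K).iseqv.trans ((bCong K ⊔ gCong K).iseqv.trans s1 s2) s3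
  have h4 : (gCong K ⊔ (bCong K ⊓ zCong K)).r (g4 K 0) (g4 K 3) := by
    have hmodlaw : (gCong K ⊔ bCong K) ⊓ zCong K = gCong K ⊔ (bCong K ⊓ zCong K) :=
      sup_inf_assoc_of_le (bCong K) h1
    have : ((gCong K ⊔ bCong K) ⊓ zCong K).r (g4 K 0) (g4 K 3) := by
      rw [Cong.inf_r]
      constructor
      · rw [sup_comm]; exact h3
      · exact h2
    rw [hmodlaw] at this
    exact this
  rw [sup_r] at h4
  obtain ⟨L, u, hu0, huL, hstep⟩ := rtg_chain h4
  exact ⟨⟨L, u, hu0, huL, fun l hl => hstep l hl⟩⟩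

variable {K}
variable {G : Algebra S} (hG : InHSP K G)

/-- Evaluation of an element of the free algebra on four generators at a
4-tuple of elements of `G`, turning it into a quaternary operation. -/
noncomputable def dEval (el : (F4 K).carrier) (w : Fin 4 → G.carrier) : G.carrier :=
  (evalFreeHom (InHSP K) (ULift.{u} (Fin 4)) G hG (fun z => w z.down)).toFun el

/-- A tuple-former. -/
def mk4 {γ : Type*} (a b c d : γ) : Fin 4 → γ := fun i =>
  if i.val = 0 then a else if i.val = 1 then b else if i.val = 2 then c else d

@[simp] theorem mk4_0 {γ : Type*} (a b c d : γ) : mk4 a b c d 0 = a := rfl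
@[simp] theorem mk4_1 {γ : Type*} (a b c d : γ) : mk4 a b c d 1 = b := rfl
@[simp] theorem mk4_2 {γ : Type*} (a b c d : γ) : mk4 a b c d 2 = c := rfl
@[simp] theorem mk4_3 {γ : Type*} (a b c d : γ) : mk4 a b c d 3 = d := rfl

theorem dEval_gen (i : Fin 4) (w : Fin 4 → G.carrier) : dEval hG (g4 K i) w = w i := rfl

theorem dEval_out (el : (F4 K).carrier) (w : Fin 4 → G.carrier) :
    dEval hG el w = (el.out).eval G (fun z => w z.down) := by
  unfold dEval
  conv_lhs => rw [← Quotient.out_eq el]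
  rfl

theorem dEval_compat (el : (F4 K).carrier) {ρ : Cong G} {w w' : Fin 4 → G.carrier}
    (h : ∀ i, ρ.r (w i) (w' i)) : ρ.r (dEval hG el w) (dEval hG el w') := by
  rw [dEval_out, dEval_out]
  exact tm_eval_compat ρ (fun z : ULift.{u} (Fin 4) => w z.down) (fun z => w' z.down) (fun z => h z.down) _

theorem dEval_mat (el : (F4 K).carrier) {x y : Cong G} {P Q R Sv : Fin 4 → G.carrier}
    (h : ∀ i, Mat x y (P i) (Q i) (R i) (Sv i)) :
    Mat x y (dEval hG el P) (dEval hG el Q) (dEval hG el R) (dEval hG el Sv) := by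
  rw [dEval_out, dEval_out, dEval_out, dEval_out]
  exact Mat.eval (el.out) (fun z : ULift.{u} (Fin 4) => P z.down) (fun z => Q z.down) (fun z => R z.down) (fun z => Sv z.down) (fun z => h z.down)

/-- Congruences generated by pairs collapsed by a hom sit inside its kernel. -/
theorem collapse {el el' : (F4 K).carrier} {w : Fin 4 → G.carrier}
    {s : (F4 K).carrier → (F4 K).carrier → Prop}
    (hker : ∀ p q, s p q →
      (evalFreeHom (InHSP K) (ULift.{u} (Fin 4)) G hG (fun z => w z.down)).toFun p =
      (evalFreeHom (InHSP K) (ULift.{u} (Fin 4)) G hG (fun z => w z.down)).toFun q)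
    (h : (conGen (F4 K) s).r el el') :
    dEval hG el w = dEval hG el' w := by
  have : conGen (F4 K) s ≤
      Hom.ker (evalFreeHom (InHSP K) (ULift.{u} (Fin 4)) G hG (fun z => w z.down)) :=
    conGen_le hker
  exact this _ _ h

theorem bCong_collapse {el el' : (F4 K).carrier} {a d : G.carrier}
    (h : (bCong K).r el el') :
    dEval hG el (mk4 a a d d) = dEval hG el' (mk4 a a d d) := by
  refine collapse hG ?_ h
  rintro p q (⟨rfl, rfl⟩ | ⟨rfl, rfl⟩) <;> rfl

theorem zCong_collapse {el el' : (F4 K).carrier} {a b : G.carrier}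
    (h : (zCong K).r el el') :
    dEval hG el (mk4 a b b a) = dEval hG el' (mk4 a b b a) := by
  refine collapse hG ?_ h
  rintro p q (⟨rfl, rfl⟩ | ⟨rfl, rfl⟩) <;> rfl

theorem gCong_collapse {el el' : (F4 K).carrier} {a b d : G.carrier}
    (h : (gCong K).r el el') :
    dEval hG el (mk4 a b b d) = dEval hG el' (mk4 a b b d) := by
  refine collapse hG ?_ h
  rintro p q ⟨rfl, rfl⟩
  rfl

/-- All the elements of a Day chain satisfy `m(a,b,b,a) = a`. -/
theorem dayCh_abba (D : DayCh K) (a b : G.carrier) :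
    ∀ l ≤ D.L, dEval hG (D.u l) (mk4 a b b a) = a := by
  intro l hl
  induction l with
  | zero => rw [D.h0]; rfl
  | succ m ih =>
    have hm : m < D.L := Nat.lt_of_succ_le hl
    have hprev := ih (Nat.le_of_lt hm)
    rcases D.hstep m hm with hs | hs
    · have := gCong_collapse hG (a := a) (b := b) (d := a) hs
      rw [← this]
      exact hprev
    · have hz : (zCong K).r (D.u m) (D.u (m + 1)) := (Cong.inf_r.mp hs).2
      rw [← zCong_collapse hG hz]
      exact hprev

end Day

/-! ### Section 6: the fundamental Day-term lemma and its consequences -/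

section Package

variable {K : Algebra S → Prop} {G : Algebra S} {A : Algebra S}

theorem Mat.of_inst {x y : Cong A} {n : ℕ} (t : Tm S (Unit ⊕ Fin n)) (a b : A.carrier)
    (c d : Fin n → A.carrier) (hab : x.r a b) (hcd : ∀ i, y.r (c i) (d i)) :
    Mat x y (t.eval A (Sum.elim (fun _ => a) c)) (t.eval A (Sum.elim (fun _ => a) d))
      (t.eval A (Sum.elim (fun _ => b) c)) (t.eval A (Sum.elim (fun _ => b) d)) := by
  refine ⟨ULift.{u} Unit, ULift.{u} (Fin n), t.relabel (Sum.map ULift.up ULift.up),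
    fun _ => a, fun _ => b, fun i => c i.down, fun i => d i.down,
    fun _ => hab, fun i => hcd i.down, ?_, ?_, ?_, ?_⟩ <;>
  · rw [eval_relabel]
    congr 1
    funext z
    cases z <;> rfl

theorem Mat.of_inst_swap {x y : Cong A} {n : ℕ} (t : Tm S (Unit ⊕ Fin n)) (a b : A.carrier)
    (c d : Fin n → A.carrier) (hab : y.r a b) (hcd : ∀ i, x.r (c i) (d i)) :
    Mat x y (t.eval A (Sum.elim (fun _ => a) c)) (t.eval A (Sum.elim (fun _ => b) c))
      (t.eval A (Sum.elim (fun _ => a) d)) (t.eval A (Sum.elim (fun _ => b) d)) := by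
  refine ⟨ULift.{u} (Fin n), ULift.{u} Unit,
    t.relabel (fun z => match z with
      | Sum.inl _ => Sum.inr (ULift.up PUnit.unit)
      | Sum.inr i => Sum.inl (ULift.up i)),
    fun i => c i.down, fun i => d i.down, fun _ => a, fun _ => b,
    fun i => hcd i.down, fun _ => hab, ?_, ?_, ?_, ?_⟩ <;>
  · rw [eval_relabel]
    congr 1
    funext z
    cases z <;> rfl

/-- The fundamental lemma: in an algebra with Day terms, for any matrix, the
second column lies in the join of the congruence generated by the first
column together with any congruence `δ` such that `C(x,y;δ)`. -/
theorem KL_col (hG : InHSP K G) (D : DayCh K) {x y δ : Cong G} (hC : Centralizes x y δ)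
    {p q r s : G.carrier} (hm : Mat x y p q r s) :
    (conGen G (fun u v => u = p ∧ v = r) ⊔ δ).r q s := by
  set Θ := conGen G (fun u v => u = p ∧ v = r) with hΘ
  have hΘle : Θ ≤ Θ ⊔ δ := le_sup_left
  have hδle : δ ≤ Θ ⊔ δ := le_sup_right
  have hpr : Θ.r p r := conGen_r_of _ ⟨rfl, rfl⟩
  have hyq : y.r p q := hm.row_top
  have hxqs : x.r q s := hm.col_right
  have key : ∀ l ≤ D.L,
      δ.r (dEval hG (D.u l) (mk4 q p r s)) (dEval hG (D.u l) (mk4 q q s s)) := by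
    intro l hl
    have hmat : Mat x y (dEval hG (D.u l) (mk4 q p p q)) (dEval hG (D.u l) (mk4 q q q q))
        (dEval hG (D.u l) (mk4 q p r s)) (dEval hG (D.u l) (mk4 q q s s)) := by
      refine dEval_mat hG _ ?_
      intro i
      fin_cases i
      · exact Mat.diag q
      · exact Mat.ypair hyq
      · exact hm
      · exact Mat.xpair hxqs
    refine C_mat hC hmat ?_
    rw [dayCh_abba hG D q p l hl, dayCh_abba hG D q q l hl]
    exact δ.iseqv.refl q
  have main : ∀ l ≤ D.L, (Θ ⊔ δ).r q (dEval hG (D.u l) (mk4 q p r s)) := by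
    intro l hl
    induction l with
    | zero =>
      rw [D.h0]
      exact (Θ ⊔ δ).iseqv.refl q
    | succ m ih =>
      have hm' : m < D.L := Nat.lt_of_succ_le hl
      have hprev := ih (Nat.le_of_lt hm')
      refine (Θ ⊔ δ).iseqv.trans hprev ?_
      rcases D.hstep m hm' with hs | hs
      · -- gCong step: move through (q,p,p,s)
        have e1 : (Θ ⊔ δ).r (dEval hG (D.u m) (mk4 q p r s)) (dEval hG (D.u m) (mk4 q p p s)) := by
          refine hΘle _ _ (dEval_compat hG _ ?_)
          intro i
          fin_cases i
          · exact Θ.iseqv.refl _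
          · exact Θ.iseqv.refl _
          · exact Θ.iseqv.symm hpr
          · exact Θ.iseqv.refl _
        have e2 : dEval hG (D.u m) (mk4 q p p s) = dEval hG (D.u (m + 1)) (mk4 q p p s) :=
          gCong_collapse hG hs
        have e3 : (Θ ⊔ δ).r (dEval hG (D.u (m + 1)) (mk4 q p p s))
            (dEval hG (D.u (m + 1)) (mk4 q p r s)) := by
          refine hΘle _ _ (dEval_compat hG _ ?_)
          intro i
          fin_cases i
          · exact Θ.iseqv.refl _
          · exact Θ.iseqv.refl _
          · exact hpr
          · exact Θ.iseqv.refl _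
        rw [e2] at e1
        exact (Θ ⊔ δ).iseqv.trans e1 e3
      · -- bCong ⊓ zCong step: move through (q,q,s,s)
        have hb : (bCong K).r (D.u m) (D.u (m + 1)) := (Cong.inf_r.mp hs).1
        have e1 := key m (Nat.le_of_lt hm')
        have e2 : dEval hG (D.u m) (mk4 q q s s) = dEval hG (D.u (m + 1)) (mk4 q q s s) :=
          bCong_collapse hG hb
        have e3 := key (m + 1) hl
        rw [e2] at e1
        exact (Θ ⊔ δ).iseqv.trans (hδle _ _ e1) ((Θ ⊔ δ).iseqv.symm (hδle _ _ e3))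
  have := main D.L le_rfl
  rw [D.hL] at this
  exact this

/-- Symmetry of the centralizing relation in congruence-modular varieties. -/
theorem cent_symm (hG : InHSP K G) (D : DayCh K) {x y δ : Cong G} (hC : Centralizes x y δ) : Centralizes y x δ := by
  intro n t a b c d hab hcd hδ
  have hm := Mat.of_inst_swap (x := x) (y := y) t a b c d hab hcd
  have hkl := KL_col hG D hC hm
  have hle : conGen G (fun u v =>
      u = t.eval G (Sum.elim (fun _ => a) c) ∧ v = t.eval G (Sum.elim (fun _ => a) d)) ≤ δ := by
    apply conGen_le
    rintro u v ⟨rfl, rfl⟩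
    exact hδ
  exact (sup_le hle le_rfl : _ ⊔ δ ≤ δ) _ _ hkl

/-- Upward monotonicity of the centralizing relation in the third argument. -/
theorem cent_up (hG : InHSP K G) (D : DayCh K) {x y δ δ' : Cong G} (hC : Centralizes x y δ) (hle : δ ≤ δ') :
    Centralizes x y δ' := by
  have hyx : Centralizes y x δ := cent_symm hG D hC
  intro n t a b c d hab hcd hδ
  have hm := (Mat.of_inst (x := x) (y := y) t a b c d hab hcd).transpose
  have hkl := KL_col hG D hyx hm
  have hle2 : conGen G (fun u v =>
      u = t.eval G (Sum.elim (fun _ => a) c) ∧ v = t.eval G (Sum.elim (fun _ => a) d)) ≤ δ' := by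
    apply conGen_le
    rintro u v ⟨rfl, rfl⟩
    exact hδ
  exact (sup_le hle2 hle : _ ⊔ δ ≤ δ') _ _ hkl

theorem cent_sup_right (hG : InHSP K G) (D : DayCh K) {x y y' δ : Cong G} (h1 : Centralizes x y δ) (h2 : Centralizes x y' δ) :
    Centralizes x (y ⊔ y') δ :=
  cent_symm hG D (cent_sup_left (cent_symm hG D h1) (cent_symm hG D h2))

end Package

/-! ### Section 7: transferring congruences and centralizing along surjections -/

section Transfer

variable {F B : Algebra S} (π : Hom F B)

theorem conComap_mono {xb yb : Cong B} (h : xb ≤ yb) : conComap π xb ≤ conComap π yb :=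
  fun _ _ hr => h _ _ hr

theorem comap_ker_le (betab : Cong B) : Hom.ker π ≤ conComap π betab := by
  intro u v huv
  show betab.r (π.toFun u) (π.toFun v)
  rw [show π.toFun u = π.toFun v from huv]
  exact betab.iseqv.refl _

theorem conComap_bot : conComap π (⊥ : Cong B) = Hom.ker π := by
  apply Cong.ext
  intro u v
  show (⊥ : Cong B).r _ _ ↔ _
  rw [Cong.bot_r]
  exact Iff.rfl

variable (hsurj : Function.Surjective π.toFun)

/-- Push a congruence containing the kernel forward along a surjection. -/
def pushCong (x : Cong F) (hx : Hom.ker π ≤ x) : Cong B where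
  r ub vb := ∃ u v, π.toFun u = ub ∧ π.toFun v = vb ∧ x.r u v
  iseqv := by
    constructor
    · intro ub
      obtain ⟨u, rfl⟩ := hsurj ub
      exact ⟨u, u, rfl, rfl, x.iseqv.refl u⟩
    · rintro ub vb ⟨u, v, rfl, rfl, huv⟩
      exact ⟨v, u, rfl, rfl, x.iseqv.symm huv⟩
    · rintro ub vb wb ⟨u, v, rfl, rfl, huv⟩ ⟨v', w, hv', rfl, hvw⟩
      refine ⟨u, w, rfl, rfl, x.iseqv.trans huv (x.iseqv.trans ?_ hvw)⟩
      exact hx _ _ hv'.symm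
  compat := by
    intro o ab bb h
    choose uu vv hu hv huv using h
    refine ⟨F.interp o uu, F.interp o vv, ?_, ?_, x.compat o _ _ huv⟩
    · rw [π.map_interp]
      congr 1
      funext i
      exact hu i
    · rw [π.map_interp]
      congr 1
      funext i
      exact hv i

theorem push_comap (betab : Cong B) :
    pushCong π hsurj (conComap π betab) (comap_ker_le π betab) = betab := by
  apply Cong.ext
  intro ub vb
  constructor
  · rintro ⟨u, v, rfl, rfl, huv⟩
    exact huv
  · intro h
    obtain ⟨u, rfl⟩ := hsurj ub
    obtain ⟨v, rfl⟩ := hsurj vb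
    exact ⟨u, v, rfl, rfl, h⟩

theorem comap_push (x : Cong F) (hx : Hom.ker π ≤ x) :
    conComap π (pushCong π hsurj x hx) = x := by
  apply Cong.ext
  intro u v
  constructor
  · rintro ⟨u', v', hu', hv', huv⟩
    exact x.iseqv.trans (hx _ _ hu'.symm) (x.iseqv.trans huv (hx _ _ hv'))
  · intro h
    exact ⟨u, v, rfl, rfl, h⟩

theorem push_eq_bot_iff (x : Cong F) (hx : Hom.ker π ≤ x) :
    pushCong π hsurj x hx = ⊥ ↔ x ≤ Hom.ker π := by
  constructor
  · intro h u v huv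
    have : (pushCong π hsurj x hx).r (π.toFun u) (π.toFun v) := ⟨u, v, rfl, rfl, huv⟩
    rw [h, Cong.bot_r] at this
    exact this
  · intro h
    apply le_antisymm ?_ bot_le
    rintro ub vb ⟨u, v, rfl, rfl, huv⟩
    rw [Cong.bot_r]
    exact h _ _ huv

theorem comap_sum_elim (a : F.carrier) (c : Fin 0 ⊕ Unit → F.carrier) : True := trivial

theorem cent_comap {xb yb zb : Cong B} (h : Centralizes xb yb zb) :
    Centralizes (conComap π xb) (conComap π yb) (conComap π zb) := by
  intro n t a b c d hab hcd hδ
  have elim_comm : ∀ (a : F.carrier) (c : Fin n → F.carrier),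
      (fun z => π.toFun (Sum.elim (fun _ : Unit => a) c z)) =
        Sum.elim (fun _ : Unit => π.toFun a) (fun i => π.toFun (c i)) := by
    intro a c
    funext z
    cases z <;> rfl
  have inst := h n t (π.toFun a) (π.toFun b) (fun i => π.toFun (c i)) (fun i => π.toFun (d i))
    hab hcd
  show zb.r (π.toFun _) (π.toFun _)
  rw [hom_eval, hom_eval, elim_comm, elim_comm]
  apply inst
  have hz : zb.r (π.toFun (t.eval F (Sum.elim (fun _ => a) c)))
      (π.toFun (t.eval F (Sum.elim (fun _ => a) d))) := hδ
  rw [hom_eval, hom_eval, elim_comm, elim_comm] at hz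
  exact hz

theorem cent_push {x y z : Cong F} (hx : Hom.ker π ≤ x) (hy : Hom.ker π ≤ y)
    (hz : Hom.ker π ≤ z) (h : Centralizes x y z) :
    Centralizes (pushCong π hsurj x hx) (pushCong π hsurj y hy) (pushCong π hsurj z hz) := by
  intro n t ab bb cb db hab hcd hδ
  obtain ⟨a, b, rfl, rfl, hab'⟩ := hab
  have hcd' : ∀ i, ∃ ci di, π.toFun ci = cb i ∧ π.toFun di = db i ∧ y.r ci di := hcd
  choose c d hc hd hcd'' using hcd'
  have elim_comm : ∀ (a : F.carrier) (c : Fin n → F.carrier),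
      (fun z => π.toFun (Sum.elim (fun _ : Unit => a) c z)) =
        Sum.elim (fun _ : Unit => π.toFun a) (fun i => π.toFun (c i)) := by
    intro a c
    funext z
    cases z <;> rfl
  have hc' : cb = fun i => π.toFun (c i) := by funext i; rw [hc i]
  have hd' : db = fun i => π.toFun (d i) := by funext i; rw [hd i]
  subst hc' hd'
  have hδ' : z.r (t.eval F (Sum.elim (fun _ => a) c)) (t.eval F (Sum.elim (fun _ => a) d)) := by
    obtain ⟨P, Q, hP, hQ, hPQ⟩ := hδ
    have h1 : π.toFun (t.eval F (Sum.elim (fun _ => a) c)) = π.toFun P := by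
      rw [hP, hom_eval, elim_comm]
    have h2 : π.toFun (t.eval F (Sum.elim (fun _ => a) d)) = π.toFun Q := by
      rw [hQ, hom_eval, elim_comm]
    exact z.iseqv.trans (hz _ _ h1) (z.iseqv.trans hPQ (z.iseqv.symm (hz _ _ h2)))
  have concl := h n t a b c d hab' hcd'' hδ'
  refine ⟨t.eval F (Sum.elim (fun _ => b) c), t.eval F (Sum.elim (fun _ => b) d), ?_, ?_, concl⟩
  · rw [hom_eval, elim_comm]
  · rw [hom_eval, elim_comm]

end Transfer

/-! ### Section 8: coordinate congruences on a subalgebra of a product -/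

section Eta

variable {F : Algebra S} {ι : Type u} {A : ι → Algebra S} (e : Hom F (prodAlg A))

/-- The restriction to `F` of the kernel of the projection onto the
coordinates in `J`. -/
def etaCong (J : Set ι) : Cong F where
  r u v := ∀ i ∈ J, e.toFun u i = e.toFun v i
  iseqv := by
    constructor
    · intro u i _; rfl
    · intro u v h i hi; exact (h i hi).symm
    · intro u v w h1 h2 i hi; exact (h1 i hi).trans (h2 i hi)
  compat := by
    intro o a b h i hi
    rw [e.map_interp, e.map_interp]
    show (A i).interp o _ = (A i).interp o _
    congr 1
    funext j
    exact h j i hi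

theorem eta_antitone {J J' : Set ι} (h : J ⊆ J') : etaCong e J' ≤ etaCong e J :=
  fun _ _ hr i hi => hr i (h hi)

theorem eta_univ (hinj : Function.Injective e.toFun) :
    etaCong e (Set.univ : Set ι) = ⊥ := by
  apply Cong.ext
  intro u v
  rw [Cong.bot_r]
  constructor
  · intro h
    apply hinj
    funext i
    exact h i trivial
  · rintro rfl
    exact (etaCong e _).iseqv.refl u

theorem coord_eval {n : ℕ} (t : Tm S (Unit ⊕ Fin n)) (v : Unit ⊕ Fin n → F.carrier) (i : ι) :
    e.toFun (t.eval F v) i = t.eval (A i) (fun z => e.toFun (v z) i) := by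
  rw [hom_eval]
  rw [prod_eval]

/-- Coordinate congruences centralize each other modulo their intersection. -/
theorem cent_eta (J J' : Set ι) :
    Centralizes (etaCong e J) (etaCong e J') (etaCong e (J ∪ J')) := by
  intro n t a b c d hab hcd hδ
  intro i hi
  rw [coord_eval, coord_eval]
  rcases hi with hi | hi
  · -- i ∈ J : use that a,b agree at i and the hypothesis at i
    have h1 : (fun z => e.toFun (Sum.elim (fun _ : Unit => b) c z) i) =
        (fun z => e.toFun (Sum.elim (fun _ : Unit => a) c z) i) := by
      funext z
      cases z with
      | inl _ => exact (hab i hi).symm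
      | inr z => rfl
    have h2 : (fun z => e.toFun (Sum.elim (fun _ : Unit => b) d z) i) =
        (fun z => e.toFun (Sum.elim (fun _ : Unit => a) d z) i) := by
      funext z
      cases z with
      | inl _ => exact (hab i hi).symm
      | inr z => rfl
    rw [h1, h2]
    have := hδ i (Or.inl hi)
    rw [coord_eval, coord_eval] at this
    exact this
  · -- i ∈ J' : the parameters agree at i
    congr 1
    funext z
    cases z with
    | inl _ => rfl
    | inr z => exact hcd z i hi

end Eta

/-! ### Section 9: induced homomorphisms between quotients -/

section QuotHom

variable {X Y : Algebra S}

/-- The homomorphism between quotients induced by a homomorphism mapping one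
congruence into another. -/
noncomputable def quotHomOfLe (h : Hom X Y) (cX : Cong X) (cY : Cong Y)
    (hle : ∀ u v, cX.r u v → cY.r (h.toFun u) (h.toFun v)) :
    Hom (quotAlg X cX) (quotAlg Y cY) where
  toFun := Quotient.lift (fun u => Quotient.mk cY.toSetoid (h.toFun u))
    (fun u v huv => Quotient.sound (hle u v huv))
  map_interp o a := by
    show Quotient.mk cY.toSetoid (h.toFun (X.interp o (fun i => (a i).out))) = _
    rw [h.map_interp]
    apply Quotient.sound
    apply cY.compat
    intro i
    show cY.r (h.toFun ((a i).out)) _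
    have h1 : Quotient.mk cY.toSetoid (h.toFun ((a i).out)) =
        Quotient.lift (fun u => Quotient.mk cY.toSetoid (h.toFun u))
          (fun u v huv => Quotient.sound (hle u v huv)) (a i) := by
      conv_rhs => rw [← Quotient.out_eq (a i)]
      rfl
    have h2 := Quotient.out_eq (Quotient.lift (fun u => Quotient.mk cY.toSetoid (h.toFun u))
      (fun u v huv => Quotient.sound (hle u v huv)) (a i))
    exact Quotient.exact (h1.trans h2.symm)

theorem quotHomOfLe_mk (h : Hom X Y) (cX : Cong X) (cY : Cong Y)
    (hle : ∀ u v, cX.r u v → cY.r (h.toFun u) (h.toFun v)) (u : X.carrier) :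
    (quotHomOfLe h cX cY hle).toFun (Quotient.mk cX.toSetoid u) =
      Quotient.mk cY.toSetoid (h.toFun u) := rfl

end QuotHom


/-- Jónsson's Theorem, as generalized by Hagemann, Hermann,
Freese, McKenzie, and Hrushovskii: Suppose `HSP(K)` is congruence-modular,
`B ∈ HSP(K)` is subdirectly irreducible with monolith `μ`, and `α` is the
centralizer of `μ`, i.e. the largest congruence with `[μ, α] = ⊥`. Then
`B/α ∈ HSP_u(K)`. -/
theorem quot_centralizer_mem_HSPu (K : Algebra S → Prop)
    (hmod : ∀ A : Algebra S, InHSP K A → IsModularLattice (Cong A))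
    {B : Algebra S} (hB : InHSP K B) (μ : Cong B) (hμ : IsMonolith B μ)
    (α : Cong B) (hα : commutator μ α = ⊥)
    (hmax : ∀ α' : Cong B, commutator μ α' = ⊥ → α' ≤ α) :
    InHSPu K (quotAlg B α) := by
  classical
  obtain ⟨D⟩ := dayCh_exists K hmod
  obtain ⟨F, ⟨ι, A, hK, e, einj⟩, π, hsurj⟩ := hB
  have hFV : InHSP K F := ⟨F, ⟨ι, A, hK, e, einj⟩, idHom F, fun a => ⟨a, rfl⟩⟩
  haveI hmodF := hmod F hFV
  set θ : Cong F := Hom.ker π with hθdef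
  set β : Cong F := conComap π μ with hβdef
  set ψ : Cong F := conComap π α with hψdef
  have hkerβ : Hom.ker π ≤ β := comap_ker_le π μ
  have hθβ : θ ≤ β := hkerβ
  have hbotα : (⊥ : Cong B) ≤ α := hmax ⊥ (le_antisymm (comm_le_right _ _) bot_le)
  have hθψ : θ ≤ ψ := by
    have h := conComap_mono π hbotα
    rw [conComap_bot] at h
    exact h
  -- witnesses for μ ≠ ⊥
  obtain ⟨u0, v0, hμr, hne0⟩ : ∃ u v, μ.r (π.toFun u) (π.toFun v) ∧ π.toFun u ≠ π.toFun v := by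
    have : ∃ ub vb, μ.r ub vb ∧ ub ≠ vb := by
      by_contra hcon
      push_neg at hcon
      refine hμ.1 (le_antisymm ?_ bot_le)
      intro u v h
      rw [Cong.bot_r]
      exact hcon u v h
    obtain ⟨ub, vb, h1, h2⟩ := this
    obtain ⟨u, rfl⟩ := hsurj ub
    obtain ⟨v, rfl⟩ := hsurj vb
    exact ⟨u, v, h1, h2⟩
  have hβθ : ¬ β ≤ θ := fun hle => hne0 (hle u0 v0 hμr)
  -- the index type is nonempty
  have hι : Nonempty ι := by
    by_contra hcon
    apply hne0
    have : e.toFun u0 = e.toFun v0 := by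
      funext i
      exact absurd ⟨i⟩ hcon
    rw [einj this]
  -- transfer lemmas
  have T4 : ∀ x : Cong F, ¬ x ≤ θ → β ≤ x ⊔ θ := by
    intro x hx
    have hker : Hom.ker π ≤ x ⊔ θ := le_sup_right
    have hne : pushCong π hsurj (x ⊔ θ) hker ≠ ⊥ := by
      intro heq
      have hle := (push_eq_bot_iff π hsurj _ hker).mp heq
      exact hx (le_trans le_sup_left hle)
    have h := conComap_mono π (hμ.2 _ hne)
    rw [comap_push] at h
    exact le_trans (le_of_eq hβdef) h
  have T5 : ∀ x : Cong F, θ ≤ x → x ≤ β → x = θ ∨ x = β := by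
    intro x h1 h2
    have hker : Hom.ker π ≤ x := h1
    by_cases hb : pushCong π hsurj x hker = ⊥
    · left
      rw [push_eq_bot_iff] at hb
      exact le_antisymm hb h1
    · right
      refine le_antisymm h2 ?_
      have h := conComap_mono π (hμ.2 _ hb)
      rw [comap_push] at h
      exact le_trans (le_of_eq hβdef) h
  have hcentβψ : Centralizes β ψ θ := by
    have h0 : Centralizes μ α (commutator μ α) := cent_comm μ α
    rw [hα] at h0
    have h := cent_comap π h0
    rw [conComap_bot] at h
    exact h
  have CRIT1 : ∀ x : Cong F, x ≤ ψ → Centralizes β (x ⊔ θ) θ := by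
    intro x hx
    exact cent_mono_right (sup_le hx hθψ) hcentβψ
  have CRIT2 : ∀ x : Cong F, Centralizes β (x ⊔ θ) θ → x ≤ ψ := by
    intro x hc
    have hker : Hom.ker π ≤ x ⊔ θ := le_sup_right
    have hkerθ : Hom.ker π ≤ θ := le_of_eq hθdef.symm
    have hp := cent_push π hsurj hkerβ hker hkerθ hc
    rw [push_comap π hsurj μ] at hp
    have hpθ : pushCong π hsurj θ hkerθ = ⊥ :=
      (push_eq_bot_iff π hsurj θ hkerθ).mpr (le_of_eq hθdef)
    rw [hpθ] at hp
    have hcomm : commutator μ (pushCong π hsurj (x ⊔ θ) hker) = ⊥ :=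
      le_antisymm (comm_le_of_cent hp) bot_le
    have h := conComap_mono π (hmax _ hcomm)
    rw [comap_push] at h
    exact le_trans le_sup_left (le_trans h (le_of_eq hψdef.symm))
  -- the cover lemma
  have cover : ∀ (n : ℕ) (Js : ℕ → Set ι), (∀ i : ι, ∃ k, k < n ∧ i ∈ Js k) →
      ∃ k, k < n ∧ etaCong e (Js k) ≤ ψ := by
    intro n Js hcov
    by_contra hcon
    push_neg at hcon
    set W : ℕ → Set ι := fun m => {i | ∃ k, k < m ∧ i ∈ Js k} with hW
    have hn1 : 1 ≤ n := by
      obtain ⟨i⟩ := hι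
      obtain ⟨k, hk, _⟩ := hcov i
      omega
    have claim : ∀ m, m + 1 ≤ n → β ≤ etaCong e (W (m + 1)) ⊔ θ := by
      intro m
      induction m with
      | zero =>
        intro h1
        have hW1 : W 1 = Js 0 := by
          ext i
          constructor
          · rintro ⟨k, hk, hik⟩
            have : k = 0 := by omega
            rwa [this] at hik
          · intro hi
            exact ⟨0, by omega, hi⟩
        rw [hW1]
        refine T4 _ ?_
        intro hle
        exact hcon 0 (by omega) (le_trans hle hθψ)
      | succ m ih =>
        intro h1
        have hβWm := ih (by omega)
        have hWm1 : W (m + 1) ∪ Js (m + 1) = W (m + 2) := by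
          ext i
          constructor
          · rintro (⟨k, hk, hik⟩ | hik)
            · exact ⟨k, by omega, hik⟩
            · exact ⟨m + 1, by omega, hik⟩
          · rintro ⟨k, hk, hik⟩
            by_cases hkm : k < m + 1
            · exact Or.inl ⟨k, hkm, hik⟩
            · have : k = m + 1 := by omega
              rw [this] at hik
              exact Or.inr hik
        have hC1 : Centralizes (etaCong e (W (m + 1)) ⊔ θ) (etaCong e (Js (m + 1)) ⊔ θ)
            (etaCong e (W (m + 2)) ⊔ θ) := by
          have base := cent_eta e (W (m + 1)) (Js (m + 1))
          rw [hWm1] at base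
          have b2 := cent_up hFV D base (le_sup_left :
            etaCong e (W (m + 2)) ≤ etaCong e (W (m + 2)) ⊔ θ)
          have b3 : Centralizes θ (etaCong e (Js (m + 1)))
              (etaCong e (W (m + 2)) ⊔ θ) := cent_of_left_le le_sup_right
          have b4 := cent_sup_left b2 b3
          have b5 : Centralizes (etaCong e (W (m + 1)) ⊔ θ) θ
              (etaCong e (W (m + 2)) ⊔ θ) := cent_of_right_le le_sup_right
          exact cent_sup_right hFV D b4 b5
        have hCβ := cent_mono_left hβWm hC1
        set c := commutator β (etaCong e (Js (m + 1)) ⊔ θ) with hc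
        have hc1 : c ≤ etaCong e (W (m + 2)) ⊔ θ := comm_le_of_cent hCβ
        have hc2 : c ≤ β := comm_le_left _ _
        have hmodlaw : (etaCong e (W (m + 2)) ⊔ θ) ⊓ β =
            (etaCong e (W (m + 2)) ⊓ β) ⊔ θ := by
          rw [sup_comm (etaCong e (W (m + 2))) θ, sup_inf_assoc_of_le _ hθβ,
            sup_comm θ (etaCong e (W (m + 2)) ⊓ β)]
        have hcx : c ≤ (etaCong e (W (m + 2)) ⊓ β) ⊔ θ := by
          rw [← hmodlaw]
          exact le_inf hc1 hc2
        rcases T5 ((etaCong e (W (m + 2)) ⊓ β) ⊔ θ) le_sup_right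
            (sup_le (le_trans inf_le_right le_rfl) hθβ) with hx | hx
        · exfalso
          have hcθ : c ≤ θ := le_trans hcx (le_of_eq hx)
          have hcent : Centralizes β (etaCong e (Js (m + 1)) ⊔ θ) θ :=
            cent_up hFV D (cent_comm _ _) hcθ
          exact hcon (m + 1) (by omega) (CRIT2 _ hcent)
        · rw [← hx] at *
          exact le_trans (le_of_eq hx.symm)
            (sup_le (le_trans inf_le_left le_sup_left) le_sup_right)
    have hfin : β ≤ etaCong e (W n) ⊔ θ := by
      obtain ⟨m, hm⟩ := Nat.exists_eq_add_of_le hn1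
      have hcl := claim m (by omega)
      have hmn : m + 1 = n := by omega
      rwa [hmn] at hcl
    have hWn : W n = Set.univ := by
      ext i
      simp only [Set.mem_univ, iff_true]
      obtain ⟨k, hk, hik⟩ := hcov i
      exact ⟨k, hk, hik⟩
    rw [hWn, eta_univ e einj, bot_sup_eq] at hfin
    exact hβθ hfin
  -- build the ultrafilter
  set Sgen : Set (Set ι) := {Jc | ∃ J : Set ι, Jc = Jᶜ ∧ ¬ etaCong e J ≤ ψ} with hSgen
  haveI hgen_ne : Filter.NeBot (Filter.generate Sgen) := by
    rw [Filter.neBot_iff]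
    intro hbot
    have hEmpty : (∅ : Set ι) ∈ Filter.generate Sgen := by
      rw [hbot]
      exact Filter.mem_bot
    rw [Filter.mem_generate_iff] at hEmpty
    obtain ⟨t, hts, htfin, htsub⟩ := hEmpty
    set l := htfin.toFinset.toList with hl
    set n := l.length with hn
    set Js : ℕ → Set ι := fun k => (l.getD k ∅)ᶜ with hJs
    have hlt : ∀ s ∈ l, s ∈ t := by
      intro s hs
      exact (Set.Finite.mem_toFinset htfin).mp (Finset.mem_toList.mp hs)
    have hmem : ∀ k, k < n → l.getD k ∅ ∈ t := by
      intro k hk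
      have h1 : l.getD k ∅ = l[k]'hk := List.getD_eq_getElem l ∅ hk
      rw [h1]
      exact hlt _ (List.getElem_mem hk)
    have hcov : ∀ i : ι, ∃ k, k < n ∧ i ∈ Js k := by
      intro i
      have : i ∉ ⋂₀ t := fun h => htsub h
      rw [Set.mem_sInter] at this
      push_neg at this
      obtain ⟨s, hst, his⟩ := this
      have : s ∈ l := by
        rw [hl]
        exact Finset.mem_toList.mpr ((Set.Finite.mem_toFinset htfin).mpr hst)
      obtain ⟨k, hk⟩ := List.get_of_mem this
      refine ⟨k.val, k.isLt, ?_⟩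
      show i ∈ (l.getD k.val ∅)ᶜ
      rw [List.getD_eq_getElem l ∅ k.isLt]
      have : l[k.val] = s := by rw [← hk]; rfl
      rw [this]
      exact his
    obtain ⟨k, hk, hkψ⟩ := cover n Js hcov
    have := hts (hmem k hk)
    obtain ⟨J, hJeq, hJψ⟩ := this
    apply hJψ
    have : Js k = J := by
      rw [hJs]
      show (l.getD k ∅)ᶜ = J
      rw [hJeq, compl_compl]
    rwa [this] at hkψ
  obtain ⟨U, hU⟩ := Ultrafilter.exists_le (Filter.generate Sgen)
  have hUZ : ∀ J ∈ U, etaCong e J ≤ ψ := by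
    intro J hJ
    by_contra hcon
    have hJc : Jᶜ ∈ Filter.generate Sgen := Filter.mem_generate_of_mem ⟨J, rfl, hcon⟩
    have hJc2 : Jᶜ ∈ U := hU hJc
    exact (Ultrafilter.compl_mem_iff_notMem.mp hJc2) hJ
  set ηU : Cong F := conComap e (ultraCong A U) with hηU
  have hηUψ : ηU ≤ ψ := by
    intro u v h
    have hJ : {i | e.toFun u i = e.toFun v i} ∈ U := h
    refine hUZ _ hJ u v ?_
    intro i hi
    exact hi
  -- assemble
  refine ⟨ι, A, U, hK, quotAlg F ηU, ⟨quotHomOfLe e ηU (ultraCong A U) (fun u v h => h), ?_⟩,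
    quotHomOfLe π ηU α (fun u v h => hηUψ u v h), ?_⟩
  · intro q q'
    induction q using Quotient.inductionOn with
    | h u =>
      induction q' using Quotient.inductionOn with
      | h v =>
        intro hq
        apply Quotient.sound
        have := Quotient.exact hq
        exact this
  · intro q
    induction q using Quotient.inductionOn with
    | h w =>
      obtain ⟨u, hu⟩ := hsurj w
      refine ⟨Quotient.mk ηU.toSetoid u, ?_⟩
      exact congrArg (Quotient.mk α.toSetoid) hu

end UAlg
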